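/- Let X be a nodal curve and q a polarization on X. If q is not general, then there exists a proper subcurve Z ⊊ X with both Z and Zᶜ connected and a q-semistable line bundle L on X such that deg_Z(L) = q_Z - δ_Z/2. Moreover, if q is not non-degenerate, Z can be chosen not to be a spine. -/

import Mathlib

open Finset

variable {V E : Type}

/-- Number of edges in `F` joining a vertex of `A` with a vertex of `B`. -/
def valS [DecidableEq V] [DecidableEq E] (ends : E → V × V) (F : Finset E)
    (A B : Finset V) : ℕ :=
  (F.filter (fun e => ((ends e).1 ∈ A ∧ (ends e).2 ∈ B) ∨
    ((ends e).1 ∈ B ∧ (ends e).2 ∈ A))).card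

/-- Number of edges of the graph joining `A` and `B`. -/
def valAB [Fintype E] [DecidableEq V] [DecidableEq E] (ends : E → V × V)
    (A B : Finset V) : ℕ :=
  valS ends Finset.univ A B

/-- Number of edges of `F` with both endpoints in `W` (loops included). -/
def insideE [DecidableEq V] [DecidableEq E] (ends : E → V × V) (W : Finset V)
    (F : Finset E) : ℕ :=
  (F.filter (fun e => (ends e).1 ∈ W ∧ (ends e).2 ∈ W)).card

/-- The Laplacian of the graph with vertex set `V` and edge set `F`. -/
def lapF [Fintype V] [Fintype E] [DecidableEq V] [DecidableEq E] (ends : E → V × V)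
    (F : Finset E) (d : V → ℤ) (v : V) : ℤ :=
  -d v * (valS ends F {v} {v}ᶜ : ℤ) +
    ∑ w ∈ Finset.univ.erase v, d w * (valS ends F {v} {w} : ℤ)

/-- Characteristic 0-cochain of a set of vertices. -/
def chi [DecidableEq V] (A : Finset V) (v : V) : ℤ := if v ∈ A then 1 else 0

/-- Reachability using edges belonging to `F`. -/
def Reaches (ends : E → V × V) (F : Finset E) (u v : V) : Prop :=
  Relation.ReflTransGen (fun a b => ∃ e ∈ F, ends e = (a, b) ∨ ends e = (b, a)) u v

/-- Connectedness of the graph with vertex set `V` and edge set `F`. -/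
def ConnF (ends : E → V × V) (F : Finset E) : Prop :=
  ∀ u v : V, Reaches ends F u v

/-- Complexity: the number of spanning trees using edges from `F`
(a spanning tree is a connected spanning subgraph with `|V| - 1` edges). -/
noncomputable def complexity [Fintype V] (ends : E → V × V) (F : Finset E) : ℕ :=
  {T : Finset E | T ⊆ F ∧ ConnF ends T ∧ T.card = Fintype.card V - 1}.ncard

/-- The quantity η(d, W) = -d_W - |S ∩ E(Γ[W])| + q_W - val(W)/2. -/
def eta [Fintype V] [Fintype E] [DecidableEq V] [DecidableEq E]
    (ends : E → V × V) (S : Finset E) (q : V → ℚ) (d : V → ℤ) (W : Finset V) : ℚ :=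
  -(∑ w ∈ W, (d w : ℚ)) - (insideE ends W S : ℚ) + (∑ w ∈ W, q w)
    - (valAB ends W Wᶜ : ℚ) / 2

/-- The quantity ε(d, W) = d_W + |S ∩ E(Γ[W])| - q_W - val(W)/2 + val_S(W). -/
def eps [Fintype V] [Fintype E] [DecidableEq V] [DecidableEq E]
    (ends : E → V × V) (S : Finset E) (q : V → ℚ) (d : V → ℤ) (W : Finset V) : ℚ :=
  (∑ w ∈ W, (d w : ℚ)) + (insideE ends W S : ℚ) - (∑ w ∈ W, q w)
    - (valAB ends W Wᶜ : ℚ) / 2 + (valS ends S W Wᶜ : ℚ)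

/-- A 0-cochain `d` is semistable on Γ∖S with respect to `q`. -/
def Semistable [Fintype V] [Fintype E] [DecidableEq V] [DecidableEq E]
    (ends : E → V × V) (S : Finset E) (q : V → ℚ) (d : V → ℤ) : Prop :=
  ((∑ v, d v : ℤ) : ℚ) = (∑ v, q v) - S.card ∧
  ∀ W : Finset V, W ≠ Finset.univ →
    (∑ w ∈ W, (d w : ℚ)) + (insideE ends W S : ℚ) ≥
      (∑ w ∈ W, q w) - (valAB ends W Wᶜ : ℚ) / 2

/-- A 0-cochain `d` is `v₀`-quasistable on Γ∖S with respect to `q`. -/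
def Quasistable [Fintype V] [Fintype E] [DecidableEq V] [DecidableEq E]
    (ends : E → V × V) (S : Finset E) (q : V → ℚ) (v₀ : V) (d : V → ℤ) : Prop :=
  Semistable ends S q d ∧
  ∀ W : Finset V, W ≠ Finset.univ → v₀ ∈ W →
    (∑ w ∈ W, (d w : ℚ)) + (insideE ends W S : ℚ) >
      (∑ w ∈ W, q w) - (valAB ends W Wᶜ : ℚ) / 2

/-- Connectedness of the subgraph induced on `A`. -/
def ConnOn (ends : E → V × V) (A : Finset V) : Prop :=
  ∀ u ∈ A, ∀ v ∈ A,
    Relation.ReflTransGen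
      (fun a b => a ∈ A ∧ b ∈ A ∧ ∃ e : E, ends e = (a, b) ∨ ends e = (b, a)) u v

/-- `C` is a connected component of the subgraph induced on `A`. -/
def IsCompOf [DecidableEq V] (ends : E → V × V) (C A : Finset V) : Prop :=
  C.Nonempty ∧ C ⊆ A ∧ ConnOn ends C ∧
  ∀ e : E, ¬ (((ends e).1 ∈ C ∧ (ends e).2 ∈ A \ C) ∨
    ((ends e).1 ∈ A \ C ∧ (ends e).2 ∈ C))

/-- An edge is a bridge (separating node) if removing it disconnects the graph. -/
def Bridge [Fintype E] [DecidableEq E] (ends : E → V × V) (e : E) : Prop :=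
  ¬ ConnF ends (Finset.univ.erase e)

/-- `e` is a boundary edge of `W`: it joins `W` with its complement. -/
def Boundary (ends : E → V × V) (W : Finset V) (e : E) : Prop :=
  ((ends e).1 ∈ W ∧ (ends e).2 ∉ W) ∨ ((ends e).1 ∉ W ∧ (ends e).2 ∈ W)

/-- `W` is a spine: all of its boundary edges are bridges (separating nodes). -/
def Spine [Fintype E] [DecidableEq E] (ends : E → V × V) (W : Finset V) : Prop :=
  ∀ e : E, Boundary ends W e → Bridge ends e

/-- The polarization `q` is integral at the subcurve `W`: for every connected
component `C` of `W` and of `Wᶜ`, the number q_C - δ_C/2 is an integer. -/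
def IntegralAt [Fintype V] [Fintype E] [DecidableEq V] [DecidableEq E]
    (ends : E → V × V) (q : V → ℚ) (W : Finset V) : Prop :=
  ∀ C : Finset V, (IsCompOf ends C W ∨ IsCompOf ends C Wᶜ) →
    ∃ n : ℤ, (∑ w ∈ C, q w) - (valAB ends C Cᶜ : ℚ) / 2 = (n : ℚ)

/-- The polarization `q` is general: not integral at any proper subcurve. -/
def GeneralPol [Fintype V] [Fintype E] [DecidableEq V] [DecidableEq E]
    (ends : E → V × V) (q : V → ℚ) : Prop :=
  ∀ W : Finset V, W.Nonempty → W ≠ Finset.univ → ¬ IntegralAt ends q W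

/-- The polarization `q` is non-degenerate: not integral at any proper subcurve
which is not a spine. -/
def NonDegPol [Fintype V] [Fintype E] [DecidableEq V] [DecidableEq E]
    (ends : E → V × V) (q : V → ℚ) : Prop :=
  ∀ W : Finset V, W.Nonempty → W ≠ Finset.univ → ¬ Spine ends W →
    ¬ IntegralAt ends q W

/-- A line bundle of multidegree `d` is `q`-semistable. -/
def SemistableLB [Fintype V] [Fintype E] [DecidableEq V] [DecidableEq E]
    (ends : E → V × V) (q : V → ℚ) (d : V → ℤ) : Prop :=
  ((∑ v, d v : ℤ) : ℚ) = (∑ v, q v) ∧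
  ∀ W : Finset V, W ≠ Finset.univ →
    ((∑ w ∈ W, d w : ℤ) : ℚ) ≥ (∑ w ∈ W, q w) - (valAB ends W Wᶜ : ℚ) / 2



section EdgeCount
variable [Fintype E] [DecidableEq V] [DecidableEq E] (ends : E → V × V)

lemma valAB_symm (A B : Finset V) : valAB ends A B = valAB ends B A := by
  unfold valAB valS
  congr 1
  apply Finset.filter_congr
  intro e _
  tauto

lemma valAB_empty (B : Finset V) : valAB ends ∅ B = 0 := by
  unfold valAB valS
  rw [Finset.card_eq_zero, Finset.filter_eq_empty_iff]
  intro e _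
  simp

lemma valAB_add_right {A B C : Finset V} (hAB : Disjoint A B) (hAC : Disjoint A C)
    (hBC : Disjoint B C) :
    valAB ends A (B ∪ C) = valAB ends A B + valAB ends A C := by
  classical
  unfold valAB valS
  rw [← Finset.card_union_of_disjoint]
  · congr 1
    rw [← Finset.filter_or]
    apply Finset.filter_congr
    intro e _
    simp only [Finset.mem_union]
    constructor
    · rintro (⟨h1, h2 | h2⟩ | ⟨h1 | h1, h2⟩) <;> tauto
    · rintro ((⟨h1, h2⟩ | ⟨h1, h2⟩) | (⟨h1, h2⟩ | ⟨h1, h2⟩)) <;> tauto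
  · rw [Finset.disjoint_left]
    rintro e he1 he2
    simp only [Finset.mem_filter] at he1 he2
    obtain ⟨-, h1⟩ := he1; obtain ⟨-, h2⟩ := he2
    rcases h1 with ⟨a1, a2⟩ | ⟨a1, a2⟩ <;> rcases h2 with ⟨b1, b2⟩ | ⟨b1, b2⟩
    · exact (Finset.disjoint_left.1 hBC a2) b2
    · exact (Finset.disjoint_left.1 hAC a1) b1
    · exact (Finset.disjoint_left.1 hAB b1) a1
    · exact (Finset.disjoint_left.1 hBC a1) b1

lemma valAB_add_left {A B C : Finset V} (hAB : Disjoint A B) (hAC : Disjoint A C)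
    (hBC : Disjoint B C) :
    valAB ends (A ∪ B) C = valAB ends A C + valAB ends B C := by
  rw [valAB_symm, valAB_add_right ends hAC.symm hBC.symm hAB, valAB_symm ends C A,
    valAB_symm ends C B]

lemma one_le_valAB {A B : Finset V} (e : E) (h : ((ends e).1 ∈ A ∧ (ends e).2 ∈ B) ∨
    ((ends e).1 ∈ B ∧ (ends e).2 ∈ A)) : 1 ≤ valAB ends A B := by
  unfold valAB valS
  rw [Nat.one_le_iff_ne_zero, ← Nat.pos_iff_ne_zero, Finset.card_pos]
  exact ⟨e, Finset.mem_filter.2 ⟨Finset.mem_univ e, h⟩⟩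

lemma sum_valAB_singleton {A B : Finset V} (hAB : Disjoint A B) :
    ∑ v ∈ A, valAB ends {v} B = valAB ends A B := by
  classical
  induction A using Finset.induction with
  | empty => simp [valAB_empty]
  | insert _ _ hx ih =>
    rename_i a s _
    rw [Finset.sum_insert hx, Finset.insert_eq, valAB_add_left]
    · rw [ih (Finset.disjoint_of_subset_left (Finset.subset_insert _ _) hAB)]
    · simpa using hx
    · exact Finset.disjoint_of_subset_left (by simp) hAB
    · exact Finset.disjoint_of_subset_left (Finset.subset_insert _ _) hAB

end EdgeCount
set_option linter.unusedSectionVars false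
set_option linter.unusedVariables false

section Reach
variable [DecidableEq V] (ends : E → V × V)

def stepOn (A : Finset V) (a b : V) : Prop :=
  a ∈ A ∧ b ∈ A ∧ ∃ e : E, ends e = (a, b) ∨ ends e = (b, a)

def rOn (A : Finset V) : V → V → Prop := Relation.ReflTransGen (stepOn ends A)

lemma connOn_iff {A : Finset V} : ConnOn ends A ↔ ∀ u ∈ A, ∀ v ∈ A, rOn ends A u v :=
  Iff.rfl

lemma stepOn_symm {A : Finset V} {a b : V} (h : stepOn ends A a b) : stepOn ends A b a := by
  obtain ⟨h1, h2, e, h3⟩ := h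
  exact ⟨h2, h1, e, h3.symm⟩

lemma rOn_symm {A : Finset V} {a b : V} (h : rOn ends A a b) : rOn ends A b a := by
  induction h with
  | refl => exact Relation.ReflTransGen.refl
  | tail _ hstep ih =>
      exact Relation.ReflTransGen.trans (Relation.ReflTransGen.single (stepOn_symm ends hstep)) ih

lemma rOn_mono {A B : Finset V} (hAB : A ⊆ B) {a b : V} (h : rOn ends A a b) :
    rOn ends B a b := by
  induction h with
  | refl => exact Relation.ReflTransGen.refl
  | tail _ hstep ih =>
      exact ih.tail ⟨hAB hstep.1, hAB hstep.2.1, hstep.2.2⟩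

open Classical in
noncomputable def compOf (A : Finset V) (v : V) : Finset V :=
  A.filter (fun w => rOn ends A v w)

lemma mem_compOf {A : Finset V} {v w : V} :
    w ∈ compOf ends A v ↔ w ∈ A ∧ rOn ends A v w := by
  classical
  simp [compOf]

lemma rOn_comp {A : Finset V} {v : V} (hv : v ∈ A) {x : V} (h : rOn ends A v x) :
    rOn ends (compOf ends A v) v x := by
  induction h with
  | refl => exact Relation.ReflTransGen.refl
  | tail hb hstep ih =>
      refine ih.tail ⟨(mem_compOf ends).2 ⟨hstep.1, hb⟩,
        (mem_compOf ends).2 ⟨hstep.2.1, hb.tail hstep⟩, hstep.2.2⟩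

lemma compOf_isCompOf {A : Finset V} {v : V} (hv : v ∈ A) :
    IsCompOf ends (compOf ends A v) A := by
  refine ⟨⟨v, (mem_compOf ends).2 ⟨hv, Relation.ReflTransGen.refl⟩⟩,
    fun w hw => ((mem_compOf ends).1 hw).1, ?_, ?_⟩
  · intro x hx y hy
    obtain ⟨hxA, hvx⟩ := (mem_compOf ends).1 hx
    obtain ⟨hyA, hvy⟩ := (mem_compOf ends).1 hy
    exact Relation.ReflTransGen.trans (rOn_symm ends (rOn_comp ends hv hvx))
      (rOn_comp ends hv hvy)
  · rintro e (⟨h1, h2⟩ | ⟨h1, h2⟩)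
    · rw [Finset.mem_sdiff] at h2
      obtain ⟨h1A, hv1⟩ := (mem_compOf ends).1 h1
      exact h2.2 ((mem_compOf ends).2 ⟨h2.1, hv1.tail ⟨h1A, h2.1, e, Or.inl rfl⟩⟩)
    · rw [Finset.mem_sdiff] at h1
      obtain ⟨h2A, hv2⟩ := (mem_compOf ends).1 h2
      exact h1.2 ((mem_compOf ends).2 ⟨h1.1, hv2.tail ⟨h2A, h1.1, e, Or.inr rfl⟩⟩)

lemma isCompOf_absorb {A C : Finset V} (hC : IsCompOf ends C A) {x y : V}
    (hx : x ∈ C) (h : rOn ends A x y) : y ∈ C := by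
  induction h with
  | refl => exact hx
  | tail _ hstep ih =>
      by_contra hc
      obtain ⟨hbA, hcA, e, he | he⟩ := hstep
      · exact hC.2.2.2 e (Or.inl ⟨by rw [he]; exact ih, by rw [he]; exact Finset.mem_sdiff.2 ⟨hcA, hc⟩⟩)
      · exact hC.2.2.2 e (Or.inr ⟨by rw [he]; exact Finset.mem_sdiff.2 ⟨hcA, hc⟩, by rw [he]; exact ih⟩)

/-- A connected subset of `A` meeting a component of `A` is contained in it. -/
lemma subset_comp {A C P : Finset V} (hC : IsCompOf ends C A) (hPA : P ⊆ A)
    (hP : ConnOn ends P) {x : V} (hxP : x ∈ P) (hxC : x ∈ C) : P ⊆ C := by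
  intro p hp
  exact isCompOf_absorb ends hC hxC (rOn_mono ends hPA (hP x hxP p hp))

def reachN (A : Finset V) : ℕ → V → V → Prop
  | 0 => fun a b => a = b
  | (n + 1) => fun a b => ∃ c, reachN A n a c ∧ stepOn ends A c b

lemma rOn_iff_reachN {A : Finset V} {a b : V} :
    rOn ends A a b ↔ ∃ n, reachN ends A n a b := by
  constructor
  · intro h
    induction h with
    | refl => exact ⟨0, rfl⟩
    | tail _ hstep ih => obtain ⟨n, hn⟩ := ih; exact ⟨n + 1, _, hn, hstep⟩
  · rintro ⟨n, hn⟩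
    induction n generalizing b with
    | zero => exact (show a = b from hn) ▸ Relation.ReflTransGen.refl
    | succ n ih => obtain ⟨c, hc, hstep⟩ := hn; exact (ih hc).tail hstep

open Classical in
noncomputable def distIn (A : Finset V) (r x : V) : ℕ :=
  if h : ∃ n, reachN ends A n r x then Nat.find h else 0

open Classical in
lemma distIn_spec {A : Finset V} {r x : V} (h : ∃ n, reachN ends A n r x) :
    reachN ends A (distIn ends A r x) r x ∧
      ∀ m, reachN ends A m r x → distIn ends A r x ≤ m := by
  rw [distIn, dif_pos h]
  exact ⟨Nat.find_spec h, fun m hm => Nat.find_le hm⟩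

lemma exists_neighbor {A : Finset V} {u z : V} (hz : rOn ends A u z) (hzu : z ≠ u) :
    ∃ w, w ∈ A ∧ w ≠ u ∧ ∃ e : E, ends e = (u, w) ∨ ends e = (w, u) := by
  obtain ⟨n, hn⟩ := (rOn_iff_reachN ends).1 hz
  clear hz
  induction n generalizing z with
  | zero => exact absurd hn.symm hzu
  | succ n ih =>
      obtain ⟨c, hc, hstep⟩ := hn
      by_cases hcu : c = u
      · subst hcu
        exact ⟨z, hstep.2.1, hzu, hstep.2.2⟩
      · exact ih hcu hc

lemma exists_noncut {A : Finset V} (hA : ConnOn ends A) {x y : V} (hx : x ∈ A)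
    (hy : y ∈ A) (hxy : x ≠ y) :
    ∃ u ∈ A, x ∈ A.erase u ∧ ConnOn ends (A.erase u) := by
  obtain ⟨u, huA, hmax⟩ := Finset.exists_max_image A (distIn ends A x) ⟨x, hx⟩
  have hex : ∀ z ∈ A, ∃ n, reachN ends A n x z := fun z hz =>
    (rOn_iff_reachN ends).1 (hA x hx z hz)
  have hur : u ≠ x := by
    intro hux
    have h0 : distIn ends A x u = 0 := by
      rw [hux]
      have := (distIn_spec ends (hex x hx)).2 0 rfl
      omega
    have hy0 : distIn ends A x y = 0 :=
      le_antisymm (le_trans (hmax y hy) (le_of_eq h0)) (Nat.zero_le _)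
    have := (distIn_spec ends (hex y hy)).1
    rw [hy0] at this
    exact hxy this
  have key : ∀ n, ∀ z ∈ A, z ≠ u → distIn ends A x z ≤ n →
      rOn ends (A.erase u) x z := by
    intro n
    induction n with
    | zero =>
        intro z hz hzu hd
        have h0 : distIn ends A x z = 0 := Nat.le_zero.1 hd
        have := (distIn_spec ends (hex z hz)).1
        rw [h0] at this
        have hxz : x = z := this
        rw [← hxz]
        exact Relation.ReflTransGen.refl
    | succ n ih =>
        intro z hz hzu hd
        rcases Nat.eq_zero_or_pos (distIn ends A x z) with h0 | hpos
        · have := (distIn_spec ends (hex z hz)).1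
          rw [h0] at this
          have hxz : x = z := this
          rw [← hxz]
          exact Relation.ReflTransGen.refl
        · obtain ⟨m, hm⟩ : ∃ m, distIn ends A x z = m + 1 :=
            ⟨distIn ends A x z - 1, by omega⟩
          have hreach := (distIn_spec ends (hex z hz)).1
          rw [hm] at hreach
          obtain ⟨c, hc, hstep⟩ := hreach
          have hcA : c ∈ A := hstep.1
          have hdc : distIn ends A x c ≤ m := (distIn_spec ends (hex c hcA)).2 m hc
          have hcu : c ≠ u := by
            intro hcueq
            subst hcueq
            have h1 := hmax z hz
            omega
          have hmn : m ≤ n := by omega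
          have := ih c hcA hcu (le_trans hdc hmn)
          exact this.tail ⟨Finset.mem_erase.2 ⟨hcu, hcA⟩, Finset.mem_erase.2 ⟨hzu, hz⟩,
            hstep.2.2⟩
  refine ⟨u, huA, Finset.mem_erase.2 ⟨fun h => hur h.symm, hx⟩, ?_⟩
  intro a ha b hb
  have hax := key (distIn ends A x a) a (Finset.mem_erase.1 ha).2 (Finset.mem_erase.1 ha).1 le_rfl
  have hbx := key (distIn ends A x b) b (Finset.mem_erase.1 hb).2 (Finset.mem_erase.1 hb).1 le_rfl
  exact Relation.ReflTransGen.trans (rOn_symm ends hax) hbx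

end Reach
section Semi
variable [Fintype E] [DecidableEq V] [DecidableEq E] (ends : E → V × V)

lemma sdiff_erase_self' {U : Finset V} {u : V} (hu : u ∈ U) : U \ U.erase u = {u} := by
  ext a
  simp only [Finset.mem_sdiff, Finset.mem_erase, Finset.mem_singleton]
  constructor
  · rintro ⟨haU, h⟩
    by_contra hne
    exact h ⟨hne, haU⟩
  · rintro rfl
    exact ⟨hu, fun h => h.1 rfl⟩

lemma sdiff_split {U Y : Finset V} {u : V} (hu : u ∈ U) (huY : u ∉ Y) :
    U \ Y = (U.erase u \ Y) ∪ {u} := by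
  ext a
  simp only [Finset.mem_sdiff, Finset.mem_erase, Finset.mem_union, Finset.mem_singleton]
  constructor
  · rintro ⟨haU, haY⟩
    by_cases hau : a = u
    · exact Or.inr hau
    · exact Or.inl ⟨⟨hau, haU⟩, haY⟩
  · rintro (⟨⟨hau, haU⟩, haY⟩ | rfl)
    · exact ⟨haU, haY⟩
    · exact ⟨hu, huY⟩

lemma sdiff_erase_erase {U Y : Finset V} {u : V} (huY : u ∈ Y) :
    U \ Y = U.erase u \ Y.erase u := by
  ext a
  simp only [Finset.mem_sdiff, Finset.mem_erase]
  constructor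
  · rintro ⟨haU, haY⟩
    have hau : a ≠ u := fun h => haY (h ▸ huY)
    exact ⟨⟨hau, haU⟩, fun h => haY h.2⟩
  · rintro ⟨⟨hau, haU⟩, h⟩
    exact ⟨haU, fun hy => h ⟨hau, hy⟩⟩

lemma semiExists (U : Finset V) :
    ∀ (q : V → ℚ) (m : ℤ), U.Nonempty → ConnOn ends U → (∑ v ∈ U, q v) = (m : ℚ) →
    ∃ d : V → ℤ, ((∑ v ∈ U, d v : ℤ) : ℚ) = (m : ℚ) ∧
      ∀ Y ⊆ U, Y ≠ U →
        ((∑ v ∈ Y, d v : ℤ) : ℚ) ≥ (∑ v ∈ Y, q v) - (valAB ends Y (U \ Y) : ℚ) / 2 := by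
  induction U using Finset.strongInductionOn with
  | _ U ih =>
  intro q m hne hconn hsum
  by_cases hcard : U.card ≤ 1
  · obtain ⟨x, hxU⟩ := Finset.card_eq_one.1 (le_antisymm hcard (Finset.card_pos.2 hne))
    subst hxU
    refine ⟨fun _ => m, by simp, ?_⟩
    intro Y hY hYne
    rcases Finset.subset_singleton_iff.1 hY with rfl | rfl
    · simp [valAB_empty]
    · exact absurd rfl hYne
  · push_neg at hcard
    obtain ⟨xx, hxx, yy, hyy, hxxyy⟩ := Finset.one_lt_card.1 hcard
    obtain ⟨u, huU, hxE, hconn'⟩ := exists_noncut ends hconn hxx hyy hxxyy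
    have hxu : xx ≠ u := (Finset.mem_erase.1 hxE).1
    have hne' : (U.erase u).Nonempty := ⟨xx, hxE⟩
    have huU' : u ∉ U.erase u := fun h => (Finset.mem_erase.1 h).1 rfl
    obtain ⟨w, hwU, hwu, e₀, he₀⟩ := exists_neighbor ends (hconn u huU xx hxx) hxu
    have hwU' : w ∈ U.erase u := Finset.mem_erase.2 ⟨hwu, hwU⟩
    obtain ⟨δu, hδu⟩ : ∃ x : ℚ, x = (valAB ends {u} (U.erase u) : ℚ) := ⟨_, rfl⟩
    have hδu1 : (1 : ℚ) ≤ δu := by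
      have h1 : 1 ≤ valAB ends {u} (U.erase u) := by
        apply one_le_valAB ends e₀
        rcases he₀ with he | he
        · exact Or.inl ⟨by simp [he], by rw [he]; exact hwU'⟩
        · exact Or.inr ⟨by rw [he]; exact hwU', by simp [he]⟩
      rw [hδu]
      exact_mod_cast h1
    obtain ⟨z, hz⟩ : ∃ x : ℚ, x = q u - δu / 2 := ⟨_, rfl⟩
    obtain ⟨lam, hlam⟩ : ∃ x : ℚ, x = (⌈z⌉ : ℚ) - z := ⟨_, rfl⟩
    have hlam0 : 0 ≤ lam := by
      have := Int.le_ceil z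
      rw [hlam]
      linarith
    have hlam1 : lam < 1 := by
      have := Int.ceil_lt_add_one z
      rw [hlam]
      linarith
    have hceil : (⌈z⌉ : ℚ) = z + lam := by rw [hlam]; ring
    set q' : V → ℚ := fun v => q v + (valAB ends {v} {u} : ℚ) / 2 - (if v = w then lam else 0)
      with hq'
    have hq'S : ∀ S : Finset V, u ∉ S →
        ∑ v ∈ S, q' v = (∑ v ∈ S, q v) + (valAB ends S {u} : ℚ) / 2
          - (if w ∈ S then lam else 0) := by
      intro S huS
      have hdisj : Disjoint S ({u} : Finset V) := by
        rw [Finset.disjoint_singleton_right]; exact huS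
      have h1 : ∑ v ∈ S, (valAB ends {v} ({u} : Finset V) : ℚ) = (valAB ends S {u} : ℚ) := by
        rw [← sum_valAB_singleton ends hdisj]
        push_cast
        ring
      have h2 : ∑ v ∈ S, (if v = w then lam else 0) = (if w ∈ S then lam else 0) :=
        Finset.sum_ite_eq' S w (fun _ => lam)
      simp only [hq', Finset.sum_sub_distrib, Finset.sum_add_distrib, ← Finset.sum_div, h1, h2]
    have hq'sum : ∑ v ∈ U.erase u, q' v = ((m - ⌈z⌉ : ℤ) : ℚ) := by
      rw [hq'S (U.erase u) huU', if_pos hwU']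
      have h3 : ∑ v ∈ U.erase u, q v = (m : ℚ) - q u := by
        have := Finset.sum_erase_add U q huU
        linarith
      have h4 : (valAB ends (U.erase u) {u} : ℚ) = δu := by
        rw [hδu, valAB_symm]
      rw [h3, h4]
      push_cast
      linarith [hceil, hz]
    obtain ⟨d', hd'sum, hd'⟩ := ih (U.erase u) (Finset.erase_ssubset huU) q' (m - ⌈z⌉)
      hne' hconn' hq'sum
    push_cast at hd'sum
    have hdite : ∀ S : Finset V, u ∉ S →
        ∑ v ∈ S, (if v = u then ⌈z⌉ else d' v) = ∑ v ∈ S, d' v := by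
      intro S huS
      apply Finset.sum_congr rfl
      intro v hv
      have hvne : v ≠ u := fun h => huS (h ▸ hv)
      rw [if_neg hvne]
    refine ⟨fun v => if v = u then ⌈z⌉ else d' v, ?_, ?_⟩
    · have h6 : ∑ v ∈ U, (if v = u then ⌈z⌉ else d' v) = (∑ v ∈ U.erase u, d' v) + ⌈z⌉ := by
        rw [← Finset.sum_erase_add U _ huU, hdite (U.erase u) huU']
        simp
      rw [h6]
      push_cast
      linarith
    · intro Y hYU hYne
      by_cases huY : u ∈ Y
      · -- u ∈ Y : combine value at u with IH bound on Y.erase u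
        have hAY : Y.erase u ⊆ U.erase u := Finset.erase_subset_erase u hYU
        have hAne : Y.erase u ≠ U.erase u := by
          intro h
          apply hYne
          rw [← Finset.insert_erase huY, h, Finset.insert_erase huU]
        have huA : u ∉ Y.erase u := fun h => (Finset.mem_erase.1 h).1 rfl
        have hmain := hd' (Y.erase u) hAY hAne
        push_cast at hmain
        have hq'A := hq'S (Y.erase u) huA
        have hUY : U \ Y = U.erase u \ Y.erase u := sdiff_erase_erase huY
        have hYsplit : Y = {u} ∪ Y.erase u := by
          rw [← Finset.insert_eq, Finset.insert_erase huY]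
        have hval1 : valAB ends Y (U \ Y)
            = valAB ends {u} (U.erase u \ Y.erase u)
              + valAB ends (Y.erase u) (U.erase u \ Y.erase u) := by
          have hd1 : Disjoint ({u} : Finset V) (Y.erase u) := by
            rw [Finset.disjoint_singleton_left]; exact huA
          have hd2 : Disjoint ({u} : Finset V) (U.erase u \ Y.erase u) := by
            rw [Finset.disjoint_singleton_left]
            exact fun h => huU' (Finset.mem_sdiff.1 h).1
          have hd3 : Disjoint (Y.erase u) (U.erase u \ Y.erase u) := Finset.disjoint_sdiff
          rw [hUY]
          have h2 : valAB ends Y (U.erase u \ Y.erase u)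
              = valAB ends ({u} ∪ Y.erase u) (U.erase u \ Y.erase u) := by
            rw [← hYsplit]
          rw [h2]
          exact valAB_add_left ends hd1 hd2 hd3
        have hval2 : valAB ends {u} (U.erase u)
            = valAB ends {u} (Y.erase u) + valAB ends {u} (U.erase u \ Y.erase u) := by
          conv_lhs => rw [← Finset.union_sdiff_of_subset hAY]
          apply valAB_add_right ends
          · rw [Finset.disjoint_singleton_left]; exact huA
          · rw [Finset.disjoint_singleton_left]
            exact fun h => huU' (Finset.mem_sdiff.1 h).1
          · exact Finset.disjoint_sdiff
        have hval1Q : (valAB ends Y (U \ Y) : ℚ)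
            = (valAB ends {u} (U.erase u \ Y.erase u) : ℚ)
              + (valAB ends (Y.erase u) (U.erase u \ Y.erase u) : ℚ) := by
          exact_mod_cast congrArg (Nat.cast : ℕ → ℚ) hval1
        have hval2Q : δu = (valAB ends {u} (Y.erase u) : ℚ)
              + (valAB ends {u} (U.erase u \ Y.erase u) : ℚ) := by
          rw [hδu]
          exact_mod_cast congrArg (Nat.cast : ℕ → ℚ) hval2
        have hsymmQ : (valAB ends {u} (Y.erase u) : ℚ)
            = (valAB ends (Y.erase u) {u} : ℚ) := by
          rw [valAB_symm]
        have hsY : ∑ v ∈ Y, (if v = u then ⌈z⌉ else d' v)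
            = ⌈z⌉ + ∑ v ∈ Y.erase u, d' v := by
          rw [← Finset.add_sum_erase Y _ huY, if_pos rfl, hdite (Y.erase u) huA]
        have hsYq : ∑ v ∈ Y, q v = q u + ∑ v ∈ Y.erase u, q v :=
          (Finset.add_sum_erase Y q huY).symm
        have hite : (if w ∈ Y.erase u then lam else 0) ≤ lam := by
          split <;> linarith
        rw [hsY, hsYq, hval1Q]
        push_cast
        rw [hq'A] at hmain
        linarith [hmain, hceil, hz, hval2Q, hsymmQ, hite, hlam0]
      · -- u ∉ Y
        by_cases hYU' : Y = U.erase u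
        · subst hYU'
          rw [hdite _ huU', sdiff_erase_self' huU]
          have h3 : ∑ v ∈ U.erase u, q v = (m : ℚ) - q u := by
            have := Finset.sum_erase_add U q huU
            linarith
          have h4 : (valAB ends (U.erase u) {u} : ℚ) = δu := by
            rw [hδu, valAB_symm]
          rw [h3, h4]
          push_cast
          linarith [hd'sum, hceil, hz, hδu1, hlam1]
        · have hYsub : Y ⊆ U.erase u := Finset.subset_erase.2 ⟨hYU, huY⟩
          have hmain := hd' Y hYsub hYU'
          push_cast at hmain
          have hq'Y := hq'S Y huY
          have hval : valAB ends Y (U \ Y) = valAB ends Y (U.erase u \ Y) + valAB ends Y {u} := by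
            rw [sdiff_split huU huY]
            apply valAB_add_right ends
            · exact Finset.disjoint_sdiff
            · rw [Finset.disjoint_singleton_right]; exact huY
            · rw [Finset.disjoint_singleton_right]
              exact fun h => huU' (Finset.mem_sdiff.1 h).1
          have hvalQ : (valAB ends Y (U \ Y) : ℚ)
              = (valAB ends Y (U.erase u \ Y) : ℚ) + (valAB ends Y {u} : ℚ) := by
            exact_mod_cast congrArg (Nat.cast : ℕ → ℚ) hval
          have hite2 : (if w ∈ Y then lam else 0) ≤ (valAB ends Y {u} : ℚ) := by
            split
            · rename_i hwY
              have h1 : 1 ≤ valAB ends Y ({u} : Finset V) := by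
                apply one_le_valAB ends e₀
                rcases he₀ with he | he
                · exact Or.inr ⟨by simp [he], by rw [he]; exact hwY⟩
                · exact Or.inl ⟨by rw [he]; exact hwY, by simp [he]⟩
              have h1Q : (1 : ℚ) ≤ (valAB ends Y ({u} : Finset V) : ℚ) := by exact_mod_cast h1
              linarith
            · positivity
          rw [hdite Y huY, hvalQ]
          push_cast
          rw [hq'Y] at hmain
          linarith [hmain, hite2]
end Semi
section Construct
variable [Fintype V] [Fintype E] [DecidableEq V] [DecidableEq E] (ends : E → V × V)

lemma sum_shift (q : V → ℚ) (c : ℚ) (B Y : Finset V) (h : Disjoint Y B) :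
    ∑ v ∈ Y, (q v + c * (valAB ends {v} B : ℚ))
      = (∑ v ∈ Y, q v) + c * (valAB ends Y B : ℚ) := by
  rw [Finset.sum_add_distrib, ← Finset.mul_sum]
  congr 2
  rw [← sum_valAB_singleton ends h, Nat.cast_sum]

lemma construct_d (q : V → ℚ) (qz : ℤ) (hq : ∑ v, q v = (qz : ℚ))
    (Z : Finset V) (hZne : Z.Nonempty) (hZuniv : Z ≠ Finset.univ)
    (hZconn : ConnOn ends Z) (hZcconn : ConnOn ends Zᶜ)
    (n : ℤ) (hn : (∑ v ∈ Z, q v) - (valAB ends Z Zᶜ : ℚ) / 2 = (n : ℚ)) :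
    ∃ d : V → ℤ, SemistableLB ends q d ∧
      ((∑ w ∈ Z, d w : ℤ) : ℚ) = (∑ w ∈ Z, q w) - (valAB ends Z Zᶜ : ℚ) / 2 := by
  have hZcne : (Zᶜ : Finset V).Nonempty := by
    rw [Finset.nonempty_iff_ne_empty]
    intro h
    exact hZuniv ((Finset.compl_eq_empty_iff Z).1 h)
  -- polarizations on the two sides
  have hdisjZZc : Disjoint Z (Zᶜ : Finset V) := disjoint_compl_right
  have hdisjZcZ : Disjoint (Zᶜ : Finset V) Z := disjoint_compl_left
  have hsum1 : ∑ v ∈ Z, (q v + (-(1/2)) * (valAB ends {v} Zᶜ : ℚ)) = (n : ℚ) := by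
    rw [sum_shift ends q (-(1/2)) Zᶜ Z hdisjZZc]
    linarith [hn]
  obtain ⟨d₁, hd₁sum, hd₁⟩ := semiExists ends Z
    (fun v => q v + (-(1/2)) * (valAB ends {v} Zᶜ : ℚ)) n hZne hZconn hsum1
  have hqsplit : ∑ v ∈ Z, q v + ∑ v ∈ Zᶜ, q v = (qz : ℚ) := by
    rw [Finset.sum_add_sum_compl Z q]; exact hq
  have hsum2 : ∑ v ∈ Zᶜ, (q v + (1/2) * (valAB ends {v} Z : ℚ)) = ((qz - n : ℤ) : ℚ) := by
    rw [sum_shift ends q (1/2) Z Zᶜ hdisjZcZ]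
    have hsymm : (valAB ends (Zᶜ : Finset V) Z : ℚ) = (valAB ends Z Zᶜ : ℚ) := by
      rw [valAB_symm]
    push_cast
    linarith [hn, hqsplit, hsymm]
  obtain ⟨d₂, hd₂sum, hd₂⟩ := semiExists ends Zᶜ
    (fun v => q v + (1/2) * (valAB ends {v} Z : ℚ)) (qz - n) hZcne hZcconn hsum2
  push_cast at hd₁sum hd₂sum
  refine ⟨fun v => if v ∈ Z then d₁ v else d₂ v, ⟨?_, ?_⟩, ?_⟩
  · -- total degree
    have h1 : ∑ v ∈ Z, (if v ∈ Z then d₁ v else d₂ v) = ∑ v ∈ Z, d₁ v :=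
      Finset.sum_congr rfl (fun v hv => if_pos hv)
    have h2 : ∑ v ∈ Zᶜ, (if v ∈ Z then d₁ v else d₂ v) = ∑ v ∈ Zᶜ, d₂ v :=
      Finset.sum_congr rfl (fun v hv => if_neg (Finset.mem_compl.1 hv))
    rw [← Finset.sum_add_sum_compl Z, h1, h2]
    push_cast
    linarith [hd₁sum, hd₂sum, hqsplit]
  · -- semistability at every proper W
    intro W hW
    have hAZ : W ∩ Z ⊆ Z := Finset.inter_subset_right
    have hBZc : W \ Z ⊆ (Zᶜ : Finset V) := by
      intro v hv
      exact Finset.mem_compl.2 (Finset.mem_sdiff.1 hv).2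
    have hdAB : Disjoint (W ∩ Z) (W \ Z) :=
      Finset.disjoint_of_subset_right hBZc (Finset.disjoint_of_subset_left hAZ hdisjZZc)
    have hWsplit : W = (W ∩ Z) ∪ (W \ Z) := by
      ext v
      simp only [Finset.mem_union, Finset.mem_inter, Finset.mem_sdiff]
      constructor
      · intro hv
        by_cases hvZ : v ∈ Z
        · exact Or.inl ⟨hv, hvZ⟩
        · exact Or.inr ⟨hv, hvZ⟩
      · rintro (⟨hv, -⟩ | ⟨hv, -⟩) <;> exact hv
    have hWd : ∑ v ∈ W, (if v ∈ Z then d₁ v else d₂ v)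
        = ∑ v ∈ W ∩ Z, d₁ v + ∑ v ∈ W \ Z, d₂ v := by
      have h1 : ∑ v ∈ W ∩ Z, (if v ∈ Z then d₁ v else d₂ v) = ∑ v ∈ W ∩ Z, d₁ v :=
        Finset.sum_congr rfl (fun v hv => if_pos (Finset.mem_inter.1 hv).2)
      have h2 : ∑ v ∈ W \ Z, (if v ∈ Z then d₁ v else d₂ v) = ∑ v ∈ W \ Z, d₂ v :=
        Finset.sum_congr rfl (fun v hv => if_neg (Finset.mem_sdiff.1 hv).2)
      rw [← h1, ← h2, ← Finset.sum_union hdAB, ← hWsplit]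
    have hWq : ∑ v ∈ W, q v = ∑ v ∈ W ∩ Z, q v + ∑ v ∈ W \ Z, q v := by
      rw [← Finset.sum_union hdAB, ← hWsplit]
    by_cases hA : W ∩ Z = Z <;> by_cases hB : W \ Z = Zᶜ
    · -- W = univ : contradiction
      exfalso
      apply hW
      apply Finset.eq_univ_of_forall
      intro v
      by_cases hv : v ∈ Z
      · have : v ∈ W ∩ Z := hA.symm ▸ hv
        exact (Finset.mem_inter.1 this).1
      · have : v ∈ W \ Z := hB.symm ▸ (Finset.mem_compl.2 hv)
        exact (Finset.mem_sdiff.1 this).1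
    · -- A = Z, B ⊊ Zᶜ
      have hZW : Z ⊆ W := by
        intro v hv
        have : v ∈ W ∩ Z := hA.symm ▸ hv
        exact (Finset.mem_inter.1 this).1
      have hWc : (Wᶜ : Finset V) = Zᶜ \ (W \ Z) := by
        ext v
        simp only [Finset.mem_compl, Finset.mem_sdiff]
        constructor
        · intro hv
          exact ⟨fun hvZ => hv (hZW hvZ), fun h => hv h.1⟩
        · rintro ⟨hvZ, h⟩ hvW
          exact h ⟨hvW, hvZ⟩
      have hWs : W = Z ∪ (W \ Z) := by
        ext v
        simp only [Finset.mem_union, Finset.mem_sdiff]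
        constructor
        · intro hv
          by_cases hvZ : v ∈ Z
          · exact Or.inl hvZ
          · exact Or.inr ⟨hv, hvZ⟩
        · rintro (hv | ⟨hv, -⟩)
          · exact hZW hv
          · exact hv
      have hdZB : Disjoint Z (W \ Z) := Finset.disjoint_sdiff
      have hdZCB : Disjoint Z (Zᶜ \ (W \ Z)) :=
        Finset.disjoint_of_subset_right (Finset.sdiff_subset) hdisjZZc
      have hdBCB : Disjoint (W \ Z) (Zᶜ \ (W \ Z)) := Finset.disjoint_sdiff
      have F1 : (valAB ends W Wᶜ : ℚ)
          = (valAB ends Z (Zᶜ \ (W \ Z)) : ℚ) + (valAB ends (W \ Z) (Zᶜ \ (W \ Z)) : ℚ) := by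
        have h2 : valAB ends W (Zᶜ \ (W \ Z)) = valAB ends (Z ∪ (W \ Z)) (Zᶜ \ (W \ Z)) := by
          rw [← hWs]
        rw [hWc, h2, valAB_add_left ends hdZB hdZCB hdBCB]
        push_cast
        ring
      have F2 : (valAB ends Z Zᶜ : ℚ)
          = (valAB ends Z (W \ Z) : ℚ) + (valAB ends Z (Zᶜ \ (W \ Z)) : ℚ) := by
        conv_lhs => rw [← Finset.union_sdiff_of_subset hBZc]
        rw [valAB_add_right ends hdZB hdZCB hdBCB]
        push_cast
        ring
      have F3 : (valAB ends (W \ Z) Z : ℚ) = (valAB ends Z (W \ Z) : ℚ) := by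
        rw [valAB_symm]
      have hd₂B := hd₂ (W \ Z) hBZc hB
      rw [sum_shift ends q (1/2) Z (W \ Z)
        (Finset.disjoint_of_subset_left hBZc hdisjZcZ)] at hd₂B
      push_cast at hd₂B
      have hsumA : ∑ v ∈ W ∩ Z, d₁ v = ∑ v ∈ Z, d₁ v := by rw [hA]
      have hsumAq : ∑ v ∈ W ∩ Z, q v = ∑ v ∈ Z, q v := by rw [hA]
      have hZcB : (valAB ends (W \ Z) (Zᶜ \ (W \ Z)) : ℚ) ≥ 0 := Nat.cast_nonneg _
      rw [hWd, hWq, hsumA, hsumAq]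
      push_cast
      linarith [hd₂B, hd₁sum, hn, F1, F2, F3]
    · -- A ⊊ Z, B = Zᶜ
      have hZcW : (Zᶜ : Finset V) ⊆ W := by
        intro v hv
        have : v ∈ W \ Z := hB.symm ▸ hv
        exact (Finset.mem_sdiff.1 this).1
      have hWc : (Wᶜ : Finset V) = Z \ (W ∩ Z) := by
        ext v
        simp only [Finset.mem_compl, Finset.mem_sdiff, Finset.mem_inter]
        constructor
        · intro hv
          have hvZ : v ∈ Z := by
            by_contra h
            exact hv (hZcW (Finset.mem_compl.2 h))
          exact ⟨hvZ, fun h => hv h.1⟩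
        · rintro ⟨hvZ, h⟩ hvW
          exact h ⟨hvW, hvZ⟩
      have hWs : W = (W ∩ Z) ∪ (Zᶜ : Finset V) := by
        ext v
        simp only [Finset.mem_union, Finset.mem_inter, Finset.mem_compl]
        constructor
        · intro hv
          by_cases hvZ : v ∈ Z
          · exact Or.inl ⟨hv, hvZ⟩
          · exact Or.inr hvZ
        · rintro (⟨hv, -⟩ | hv)
          · exact hv
          · exact hZcW (Finset.mem_compl.2 hv)
      have hdACA : Disjoint (W ∩ Z) (Z \ (W ∩ Z)) := Finset.disjoint_sdiff
      have hdZcCA : Disjoint (Zᶜ : Finset V) (Z \ (W ∩ Z)) :=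
        Finset.disjoint_of_subset_right (Finset.sdiff_subset) hdisjZcZ
      have hdAZc : Disjoint (W ∩ Z) (Zᶜ : Finset V) :=
        Finset.disjoint_of_subset_left hAZ hdisjZZc
      have F1 : (valAB ends W Wᶜ : ℚ)
          = (valAB ends (W ∩ Z) (Z \ (W ∩ Z)) : ℚ)
            + (valAB ends (Zᶜ : Finset V) (Z \ (W ∩ Z)) : ℚ) := by
        have h2 : valAB ends W (Z \ (W ∩ Z)) = valAB ends ((W ∩ Z) ∪ Zᶜ) (Z \ (W ∩ Z)) := by
          rw [← hWs]
        rw [hWc, h2, valAB_add_left ends hdAZc hdACA hdZcCA]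
        push_cast
        ring
      have F2 : (valAB ends Z Zᶜ : ℚ)
          = (valAB ends (W ∩ Z) Zᶜ : ℚ) + (valAB ends (Z \ (W ∩ Z)) Zᶜ : ℚ) := by
        have h2 : valAB ends Z Zᶜ = valAB ends ((W ∩ Z) ∪ (Z \ (W ∩ Z))) Zᶜ := by
          rw [Finset.union_sdiff_of_subset hAZ]
        rw [h2, valAB_add_left ends hdACA hdAZc
          (Finset.disjoint_of_subset_left Finset.sdiff_subset hdisjZZc)]
        push_cast
        ring
      have F3 : (valAB ends (Zᶜ : Finset V) (Z \ (W ∩ Z)) : ℚ)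
          = (valAB ends (Z \ (W ∩ Z)) Zᶜ : ℚ) := by
        rw [valAB_symm]
      have hd₁A := hd₁ (W ∩ Z) hAZ hA
      rw [sum_shift ends q (-(1/2)) Zᶜ (W ∩ Z)
        (Finset.disjoint_of_subset_left hAZ hdisjZZc)] at hd₁A
      push_cast at hd₁A
      have hsumB : ∑ v ∈ W \ Z, d₂ v = ∑ v ∈ Zᶜ, d₂ v := by rw [hB]
      have hsumBq : ∑ v ∈ W \ Z, q v = ∑ v ∈ Zᶜ, q v := by rw [hB]
      have hpos1 : (valAB ends (Z \ (W ∩ Z)) Zᶜ : ℚ) ≥ 0 := Nat.cast_nonneg _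
      have hpos2 : (valAB ends (W ∩ Z) Zᶜ : ℚ) ≥ 0 := Nat.cast_nonneg _
      rw [hWd, hWq, hsumB, hsumBq]
      push_cast
      linarith [hd₁A, hd₂sum, hn, hqsplit, F1, F2, F3]
    · -- A ⊊ Z, B ⊊ Zᶜ
      have hWc : (Wᶜ : Finset V) = (Z \ (W ∩ Z)) ∪ (Zᶜ \ (W \ Z)) := by
        ext v
        simp only [Finset.mem_compl, Finset.mem_sdiff, Finset.mem_inter, Finset.mem_union]
        by_cases hvZ : v ∈ Z
        · constructor
          · intro hv
            exact Or.inl ⟨hvZ, fun h => hv h.1⟩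
          · rintro (⟨-, h⟩ | ⟨h, -⟩) hvW
            · exact h ⟨hvW, hvZ⟩
            · exact h hvZ
        · constructor
          · intro hv
            exact Or.inr ⟨hvZ, fun h => hv h.1⟩
          · rintro (⟨h, -⟩ | ⟨-, h⟩) hvW
            · exact hvZ h
            · exact h ⟨hvW, hvZ⟩
      have hdACA : Disjoint (W ∩ Z) (Z \ (W ∩ Z)) := Finset.disjoint_sdiff
      have hdBCB : Disjoint (W \ Z) (Zᶜ \ (W \ Z)) := Finset.disjoint_sdiff
      have hdACB : Disjoint (W ∩ Z) (Zᶜ \ (W \ Z)) :=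
        Finset.disjoint_of_subset_right Finset.sdiff_subset
          (Finset.disjoint_of_subset_left hAZ hdisjZZc)
      have hdBCA : Disjoint (W \ Z) (Z \ (W ∩ Z)) :=
        Finset.disjoint_of_subset_right Finset.sdiff_subset
          (Finset.disjoint_of_subset_left hBZc hdisjZcZ)
      have hdAB2 : Disjoint (W ∩ Z) (W \ Z) := hdAB
      have hdCACB : Disjoint (Z \ (W ∩ Z)) (Zᶜ \ (W \ Z)) :=
        Finset.disjoint_of_subset_left Finset.sdiff_subset
          (Finset.disjoint_of_subset_right Finset.sdiff_subset hdisjZZc)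
      have F1 : (valAB ends W Wᶜ : ℚ)
          = ((valAB ends (W ∩ Z) (Z \ (W ∩ Z)) : ℚ) + (valAB ends (W ∩ Z) (Zᶜ \ (W \ Z)) : ℚ))
            + ((valAB ends (W \ Z) (Z \ (W ∩ Z)) : ℚ)
              + (valAB ends (W \ Z) (Zᶜ \ (W \ Z)) : ℚ)) := by
        have h2 : valAB ends W ((Z \ (W ∩ Z)) ∪ (Zᶜ \ (W \ Z)))
            = valAB ends ((W ∩ Z) ∪ (W \ Z)) ((Z \ (W ∩ Z)) ∪ (Zᶜ \ (W \ Z))) := by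
          rw [← hWsplit]
        rw [hWc, h2, valAB_add_left ends hdAB2
          (Finset.disjoint_union_right.2 ⟨hdACA, hdACB⟩)
          (Finset.disjoint_union_right.2 ⟨hdBCA, hdBCB⟩)]
        rw [valAB_add_right ends hdACA hdACB hdCACB, valAB_add_right ends hdBCA hdBCB hdCACB]
        push_cast
        ring
      have F2 : (valAB ends (W ∩ Z) Zᶜ : ℚ)
          = (valAB ends (W ∩ Z) (W \ Z) : ℚ) + (valAB ends (W ∩ Z) (Zᶜ \ (W \ Z)) : ℚ) := by
        conv_lhs => rw [← Finset.union_sdiff_of_subset hBZc]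
        rw [valAB_add_right ends hdAB2 hdACB hdBCB]
        push_cast
        ring
      have F3 : (valAB ends (W \ Z) Z : ℚ)
          = (valAB ends (W \ Z) (W ∩ Z) : ℚ) + (valAB ends (W \ Z) (Z \ (W ∩ Z)) : ℚ) := by
        have h2 : valAB ends (W \ Z) Z = valAB ends (W \ Z) ((W ∩ Z) ∪ (Z \ (W ∩ Z))) := by
          rw [Finset.union_sdiff_of_subset hAZ]
        rw [h2, valAB_add_right ends hdAB.symm hdBCA hdACA]
        push_cast
        ring
      have F4 : (valAB ends (W ∩ Z) (W \ Z) : ℚ) = (valAB ends (W \ Z) (W ∩ Z) : ℚ) := by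
        rw [valAB_symm]
      have hd₁A := hd₁ (W ∩ Z) hAZ hA
      rw [sum_shift ends q (-(1/2)) Zᶜ (W ∩ Z)
        (Finset.disjoint_of_subset_left hAZ hdisjZZc)] at hd₁A
      push_cast at hd₁A
      have hd₂B := hd₂ (W \ Z) hBZc hB
      rw [sum_shift ends q (1/2) Z (W \ Z)
        (Finset.disjoint_of_subset_left hBZc hdisjZcZ)] at hd₂B
      push_cast at hd₂B
      have hpos : (valAB ends (W \ Z) (Z \ (W ∩ Z)) : ℚ) ≥ 0 := Nat.cast_nonneg _
      rw [hWd, hWq]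
      push_cast
      linarith [hd₁A, hd₂B, F1, F2, F3, F4]
  · -- equality at Z
    have h1 : ∑ v ∈ Z, (if v ∈ Z then d₁ v else d₂ v) = ∑ v ∈ Z, d₁ v :=
      Finset.sum_congr rfl (fun v hv => if_pos hv)
    rw [h1, hn]
    push_cast
    linarith [hd₁sum]

end Construct
section PartA
variable [Fintype V] [Fintype E] [DecidableEq V] [DecidableEq E] (ends : E → V × V)

lemma comp_unique {A C C' : Finset V} (hC : IsCompOf ends C A) (hC' : IsCompOf ends C' A)
    {y : V} (hy : y ∈ C) (hy' : y ∈ C') : C = C' :=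
  Finset.Subset.antisymm
    (subset_comp ends hC' hC.2.1 hC.2.2.1 hy hy')
    (subset_comp ends hC hC'.2.1 hC'.2.2.1 hy' hy)

lemma beta_union (q : V → ℚ) {A B : Finset V} (h : Disjoint A B) :
    (∑ v ∈ A ∪ B, q v) - (valAB ends (A ∪ B) (A ∪ B)ᶜ : ℚ) / 2
      = ((∑ v ∈ A, q v) - (valAB ends A Aᶜ : ℚ) / 2)
        + ((∑ v ∈ B, q v) - (valAB ends B Bᶜ : ℚ) / 2)
        + (valAB ends A B : ℚ) := by
  have hAcompl : (Aᶜ : Finset V) = B ∪ (A ∪ B)ᶜ := by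
    ext x
    simp only [Finset.mem_compl, Finset.mem_union]
    constructor
    · intro hx
      by_cases hxB : x ∈ B
      · exact Or.inl hxB
      · exact Or.inr (by push_neg; exact ⟨hx, hxB⟩)
    · rintro (hx | hx)
      · exact fun hxA => (Finset.disjoint_left.1 h hxA) hx
      · intro hxA
        exact hx (Or.inl hxA)
  have hBcompl : (Bᶜ : Finset V) = A ∪ (A ∪ B)ᶜ := by
    ext x
    simp only [Finset.mem_compl, Finset.mem_union]
    constructor
    · intro hx
      by_cases hxA : x ∈ A
      · exact Or.inl hxA
      · exact Or.inr (by push_neg; exact ⟨hxA, hx⟩)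
    · rintro (hx | hx)
      · exact fun hxB => (Finset.disjoint_left.1 h hx) hxB
      · intro hxB
        exact hx (Or.inr hxB)
  have hdAc : Disjoint A ((A ∪ B)ᶜ : Finset V) := by
    rw [Finset.disjoint_left]
    intro x hx hx'
    exact (Finset.mem_compl.1 hx') (Finset.mem_union_left B hx)
  have hdBc : Disjoint B ((A ∪ B)ᶜ : Finset V) := by
    rw [Finset.disjoint_left]
    intro x hx hx'
    exact (Finset.mem_compl.1 hx') (Finset.mem_union_right A hx)
  have e1 : valAB ends A Aᶜ = valAB ends A B + valAB ends A ((A ∪ B)ᶜ) := by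
    rw [hAcompl, valAB_add_right ends h hdAc hdBc]
  have e2 : valAB ends B Bᶜ = valAB ends B A + valAB ends B ((A ∪ B)ᶜ) := by
    rw [hBcompl, valAB_add_right ends h.symm hdBc hdAc]
  have e3 : valAB ends (A ∪ B) ((A ∪ B)ᶜ) = valAB ends A ((A ∪ B)ᶜ) + valAB ends B ((A ∪ B)ᶜ) :=
    valAB_add_left ends h hdAc hdBc
  have e4 : valAB ends A B = valAB ends B A := valAB_symm ends A B
  have e5 : ∑ v ∈ A ∪ B, q v = ∑ v ∈ A, q v + ∑ v ∈ B, q v := Finset.sum_union h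
  rw [e5]
  have e1Q : (valAB ends A Aᶜ : ℚ) = (valAB ends A B : ℚ) + (valAB ends A ((A ∪ B)ᶜ) : ℚ) := by
    exact_mod_cast congrArg (Nat.cast : ℕ → ℚ) e1
  have e2Q : (valAB ends B Bᶜ : ℚ) = (valAB ends B A : ℚ) + (valAB ends B ((A ∪ B)ᶜ) : ℚ) := by
    exact_mod_cast congrArg (Nat.cast : ℕ → ℚ) e2
  have e3Q : (valAB ends (A ∪ B) ((A ∪ B)ᶜ) : ℚ)
      = (valAB ends A ((A ∪ B)ᶜ) : ℚ) + (valAB ends B ((A ∪ B)ᶜ) : ℚ) := by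
    exact_mod_cast congrArg (Nat.cast : ℕ → ℚ) e3
  have e4Q : (valAB ends A B : ℚ) = (valAB ends B A : ℚ) := by
    exact_mod_cast congrArg (Nat.cast : ℕ → ℚ) e4
  linarith [e1Q, e2Q, e3Q, e4Q]

lemma int_shell (q : V → ℚ) (W₀ : Finset V) (hint : IntegralAt ends q W₀) :
    ∀ Y : Finset V,
      (∀ x ∈ Y, ∃ C, (IsCompOf ends C W₀ ∨ IsCompOf ends C W₀ᶜ) ∧ x ∈ C ∧ C ⊆ Y) →
      ∃ k : ℤ, (∑ v ∈ Y, q v) - (valAB ends Y Yᶜ : ℚ) / 2 = (k : ℚ) := by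
  intro Y
  induction Y using Finset.strongInductionOn with
  | _ Y ihY =>
  intro hcl
  rcases Finset.eq_empty_or_nonempty Y with rfl | ⟨x, hx⟩
  · exact ⟨0, by simp [valAB_empty]⟩
  obtain ⟨C, hCcomp, hxC, hCY⟩ := hcl x hx
  have hCne : C.Nonempty := ⟨x, hxC⟩
  have hdisj : Disjoint C (Y \ C) := Finset.disjoint_sdiff
  have e := beta_union ends q hdisj
  rw [Finset.union_sdiff_of_subset hCY] at e
  obtain ⟨k₁, hk₁⟩ := hint C hCcomp
  have hss : Y \ C ⊂ Y := by
    apply Finset.sdiff_ssubset hCY hCne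
  have hcl' : ∀ z ∈ Y \ C, ∃ D, (IsCompOf ends D W₀ ∨ IsCompOf ends D W₀ᶜ) ∧ z ∈ D ∧
      D ⊆ Y \ C := by
    intro z hz
    obtain ⟨hzY, hzC⟩ := Finset.mem_sdiff.1 hz
    obtain ⟨D, hDcomp, hzD, hDY⟩ := hcl z hzY
    refine ⟨D, hDcomp, hzD, ?_⟩
    intro p hp
    rw [Finset.mem_sdiff]
    refine ⟨hDY hp, fun hpC => ?_⟩
    -- p ∈ D ∩ C : show D = C, contradiction with z ∉ C
    rcases hDcomp with hD | hD <;> rcases hCcomp with hC | hC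
    · exact hzC ((comp_unique ends hD hC hp hpC) ▸ hzD)
    · exact absurd (hD.2.1 hp) (Finset.mem_compl.1 (hC.2.1 hpC))
    · exact absurd (hC.2.1 hpC) (Finset.mem_compl.1 (hD.2.1 hp))
    · exact hzC ((comp_unique ends hD hC hp hpC) ▸ hzD)
  obtain ⟨k₂, hk₂⟩ := ihY (Y \ C) hss hcl'
  refine ⟨k₁ + k₂ + (valAB ends C (Y \ C) : ℤ), ?_⟩
  rw [e, hk₁, hk₂]
  push_cast
  ring

lemma select (q : V → ℚ) (hconn : ConnF ends (Finset.univ : Finset E))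
    (W₀ : Finset V) (hint : IntegralAt ends q W₀)
    (u : V) (hu : u ∈ W₀) (v : V) (hv : v ∉ W₀) :
    ∃ Zc : Finset V, Zc.Nonempty ∧ Zc ≠ Finset.univ ∧ ConnOn ends Zc ∧ ConnOn ends Zcᶜ ∧
      (∃ k : ℤ, (∑ w ∈ Zc, q w) - (valAB ends Zc Zcᶜ : ℚ) / 2 = (k : ℚ)) ∧
      v ∈ Zc ∧ u ∉ Zc := by
  have hC₁ := compOf_isCompOf ends hu
  set C₁ := compOf ends W₀ u with hC₁def
  have huC₁ : u ∈ C₁ := (mem_compOf ends).2 ⟨hu, Relation.ReflTransGen.refl⟩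
  have hvC₁ : v ∈ (C₁ᶜ : Finset V) := Finset.mem_compl.2 (fun h => hv (hC₁.2.1 h))
  have hE := compOf_isCompOf ends hvC₁
  set Ec := compOf ends (C₁ᶜ) v with hEdef
  have hvE : v ∈ Ec := (mem_compOf ends).2 ⟨hvC₁, Relation.ReflTransGen.refl⟩
  have hEC₁c : Ec ⊆ (C₁ᶜ : Finset V) := hE.2.1
  have huE : u ∉ Ec := fun h => (Finset.mem_compl.1 (hEC₁c h)) huC₁
  have hC₁Ec : C₁ ⊆ (Ecᶜ : Finset V) := by
    intro p hp
    exact Finset.mem_compl.2 (fun hpE => (Finset.mem_compl.1 (hEC₁c hpE)) hp)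
  have huEc : u ∈ (Ecᶜ : Finset V) := Finset.mem_compl.2 huE
  -- connectivity of the complement
  have hreach : ∀ x : V, Reaches ends Finset.univ x u → x ∈ (Ecᶜ : Finset V) →
      rOn ends (Ecᶜ : Finset V) x u := by
    intro x h
    induction h using Relation.ReflTransGen.head_induction_on with
    | refl => intro _; exact Relation.ReflTransGen.refl
    | head hstep htail ih =>
        rename_i a b
        intro haEc
        by_cases haC₁ : a ∈ C₁
        · exact rOn_mono ends hC₁Ec (hC₁.2.2.1 a haC₁ u huC₁)
        · obtain ⟨e, -, he⟩ := hstep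
          have hbEc : b ∈ (Ecᶜ : Finset V) := by
            rw [Finset.mem_compl]
            intro hbE
            apply hE.2.2.2 e
            rcases he with he | he
            · right
              constructor
              · rw [he]
                exact Finset.mem_sdiff.2 ⟨Finset.mem_compl.2 haC₁, Finset.mem_compl.1 haEc⟩
              · rw [he]
                exact hbE
            · left
              constructor
              · rw [he]
                exact hbE
              · rw [he]
                exact Finset.mem_sdiff.2 ⟨Finset.mem_compl.2 haC₁, Finset.mem_compl.1 haEc⟩
          exact Relation.ReflTransGen.head ⟨haEc, hbEc, e, he⟩ (ih hbEc)
  have hEcconn : ConnOn ends (Ecᶜ : Finset V) := by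
    intro a ha b hb
    exact Relation.ReflTransGen.trans (hreach a (hconn a u) ha)
      (rOn_symm ends (hreach b (hconn b u) hb))
  -- integrality at Ec
  have hclosure : ∀ x ∈ Ec, ∃ C, (IsCompOf ends C W₀ ∨ IsCompOf ends C W₀ᶜ) ∧ x ∈ C ∧
      C ⊆ Ec := by
    intro x hxE
    by_cases hxW : x ∈ W₀
    · have hCx := compOf_isCompOf ends hxW
      have hxCx : x ∈ compOf ends W₀ x := (mem_compOf ends).2 ⟨hxW, Relation.ReflTransGen.refl⟩
      refine ⟨compOf ends W₀ x, Or.inl hCx, hxCx, ?_⟩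
      have hsub : compOf ends W₀ x ⊆ (C₁ᶜ : Finset V) := by
        intro p hp
        rw [Finset.mem_compl]
        intro hpC₁
        have : compOf ends W₀ x = C₁ := comp_unique ends hCx hC₁ hp hpC₁
        have hxC₁ : x ∈ C₁ := this ▸ hxCx
        exact (Finset.mem_compl.1 (hEC₁c hxE)) hxC₁
      exact subset_comp ends hE hsub hCx.2.2.1 hxCx hxE
    · have hxWc : x ∈ (W₀ᶜ : Finset V) := Finset.mem_compl.2 hxW
      have hCx := compOf_isCompOf ends hxWc
      have hxCx : x ∈ compOf ends (W₀ᶜ) x :=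
        (mem_compOf ends).2 ⟨hxWc, Relation.ReflTransGen.refl⟩
      refine ⟨compOf ends (W₀ᶜ) x, Or.inr hCx, hxCx, ?_⟩
      have hsub : compOf ends (W₀ᶜ) x ⊆ (C₁ᶜ : Finset V) := by
        intro p hp
        rw [Finset.mem_compl]
        intro hpC₁
        exact (Finset.mem_compl.1 (hCx.2.1 hp)) (hC₁.2.1 hpC₁)
      exact subset_comp ends hE hsub hCx.2.2.1 hxCx hxE
  obtain ⟨k, hk⟩ := int_shell ends q W₀ hint Ec hclosure
  exact ⟨Ec, ⟨v, hvE⟩, fun h => huE (h ▸ Finset.mem_univ u), hE.2.2.1, hEcconn, ⟨k, hk⟩,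
    hvE, huE⟩

end PartA

theorem stmt17' [Fintype V] [Fintype E] [DecidableEq V] [DecidableEq E] (ends : E → V × V)
    (hconn : ConnF ends (Finset.univ : Finset E)) (q : V → ℚ) (qz : ℤ)
    (hq : ∑ v, q v = (qz : ℚ)) :
    (¬ GeneralPol ends q →
      ∃ W : Finset V, W.Nonempty ∧ W ≠ Finset.univ ∧
        ConnOn ends W ∧ ConnOn ends Wᶜ ∧
        ∃ d : V → ℤ, SemistableLB ends q d ∧
          ((∑ w ∈ W, d w : ℤ) : ℚ) = (∑ w ∈ W, q w) - (valAB ends W Wᶜ : ℚ) / 2) ∧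
    (¬ NonDegPol ends q →
      ∃ W : Finset V, W.Nonempty ∧ W ≠ Finset.univ ∧
        ConnOn ends W ∧ ConnOn ends Wᶜ ∧ ¬ Spine ends W ∧
        ∃ d : V → ℤ, SemistableLB ends q d ∧
          ((∑ w ∈ W, d w : ℤ) : ℚ) = (∑ w ∈ W, q w) - (valAB ends W Wᶜ : ℚ) / 2) := by
  constructor
  · intro hng
    unfold GeneralPol at hng
    push_neg at hng
    obtain ⟨W₀, hW₀ne, hW₀univ, hint⟩ := hng
    obtain ⟨u, hu⟩ := hW₀ne
    obtain ⟨v, hv⟩ : ∃ v, v ∉ W₀ := by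
      by_contra h
      push_neg at h
      exact hW₀univ (Finset.eq_univ_of_forall h)
    obtain ⟨Zc, hZne, hZuniv, hZconn, hZcconn, ⟨k, hk⟩, -, -⟩ :=
      select ends q hconn W₀ hint u hu v hv
    obtain ⟨d, hd1, hd2⟩ := construct_d ends q qz hq Zc hZne hZuniv hZconn hZcconn k hk
    exact ⟨Zc, hZne, hZuniv, hZconn, hZcconn, d, hd1, hd2⟩
  · intro hnd
    unfold NonDegPol at hnd
    push_neg at hnd
    obtain ⟨W₀, hW₀ne, hW₀univ, hnspine, hint⟩ := hnd
    unfold Spine at hnspine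
    push_neg at hnspine
    obtain ⟨e₀, hbnd, hnbridge⟩ := hnspine
    rcases hbnd with ⟨h1, h2⟩ | ⟨h1, h2⟩
    · -- (ends e₀).1 ∈ W₀, (ends e₀).2 ∉ W₀
      obtain ⟨Zc, hZne, hZuniv, hZconn, hZcconn, ⟨k, hk⟩, hvZ, huZ⟩ :=
        select ends q hconn W₀ hint (ends e₀).1 h1 (ends e₀).2 h2
      obtain ⟨d, hd1, hd2⟩ := construct_d ends q qz hq Zc hZne hZuniv hZconn hZcconn k hk
      refine ⟨Zc, hZne, hZuniv, hZconn, hZcconn, ?_, d, hd1, hd2⟩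
      intro hs
      exact hnbridge (hs e₀ (Or.inr ⟨huZ, hvZ⟩))
    · -- (ends e₀).1 ∉ W₀, (ends e₀).2 ∈ W₀
      obtain ⟨Zc, hZne, hZuniv, hZconn, hZcconn, ⟨k, hk⟩, hvZ, huZ⟩ :=
        select ends q hconn W₀ hint (ends e₀).2 h2 (ends e₀).1 h1
      obtain ⟨d, hd1, hd2⟩ := construct_d ends q qz hq Zc hZne hZuniv hZconn hZcconn k hk
      refine ⟨Zc, hZne, hZuniv, hZconn, hZcconn, ?_, d, hd1, hd2⟩
      intro hs
      exact hnbridge (hs e₀ (Or.inl ⟨hvZ, huZ⟩))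


/-- if `q` is not general then there is a proper subcurve `W` with
`W` and `Wᶜ` connected and a `q`-semistable line bundle `d` with
deg_W d = q_W - δ_W/2; if moreover `q` is not non-degenerate, `W` can be chosen
not to be a spine. -/
theorem stmt17 [Fintype V] [Fintype E] [DecidableEq V] [DecidableEq E] (ends : E → V × V)
    (hconn : ConnF ends (Finset.univ : Finset E)) (q : V → ℚ) (qz : ℤ)
    (hq : ∑ v, q v = (qz : ℚ)) :
    (¬ GeneralPol ends q →
      ∃ W : Finset V, W.Nonempty ∧ W ≠ Finset.univ ∧
        ConnOn ends W ∧ ConnOn ends Wᶜ ∧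
        ∃ d : V → ℤ, SemistableLB ends q d ∧
          ((∑ w ∈ W, d w : ℤ) : ℚ) = (∑ w ∈ W, q w) - (valAB ends W Wᶜ : ℚ) / 2) ∧
    (¬ NonDegPol ends q →
      ∃ W : Finset V, W.Nonempty ∧ W ≠ Finset.univ ∧
        ConnOn ends W ∧ ConnOn ends Wᶜ ∧ ¬ Spine ends W ∧
        ∃ d : V → ℤ, SemistableLB ends q d ∧
          ((∑ w ∈ W, d w : ℤ) : ℚ) = (∑ w ∈ W, q w) - (valAB ends W Wᶜ : ℚ) / 2) := by
  exact stmt17' ends hconn q qz hq
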